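/- Let n ≥ 2, ξ ∈ ℝⁿ with |ξ'|² − ξ_j² > 0 for some j ∈ {1,…,n−1} (so in particular ξ' ≠ 0). Define μ₁ := −(ξ_n/|ξ|) e(1) + (|ξ'|/|ξ|) e_n, μ₂ := (|ξ'|² − ξ_j²)^{−1/2} (ξ_j e(1) − |ξ'| e_j), α := ξ_j |ξ| / |ξ'| and β := (ξ_n/|ξ'|)(|ξ'|² − ξ_j²)^{1/2}. Then μ₁ and μ₂ are unit vectors, ξ·μ₁ = ξ·μ₂ = μ₁·μ₂ = 0, the last coordinate of μ₂ is zero, and ξ_j e_n − ξ_n e_j = α μ₁ + β μ₂. -/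

import Mathlib

open MeasureTheory Filter Complex
open scoped ENNReal RealInnerProductSpace

noncomputable section

/-- The last index of `Fin n` (i.e. the `n`-th coordinate). -/
def lastIdx (n : ℕ) (hn : 0 < n) : Fin n := ⟨n - 1, Nat.sub_lt hn one_pos⟩

/-- `|ξ'|`, the Euclidean norm of the first `n-1` coordinates of `ξ`. -/
def xiPrimeNorm (n : ℕ) (ξ : EuclideanSpace ℝ (Fin n)) : ℝ :=
  Real.sqrt (∑ i ∈ Finset.univ.filter (fun i : Fin n => (i : ℕ) < n - 1), ξ i ^ 2)

/-- `e(1) := (ξ'/|ξ'|, 0)`. -/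
def eOneVec (n : ℕ) (ξ : EuclideanSpace ℝ (Fin n)) : EuclideanSpace ℝ (Fin n) :=
  WithLp.toLp 2 fun i => if (i : ℕ) < n - 1 then ξ i / xiPrimeNorm n ξ else 0

/-- `μ₁ := -(ξ_n/|ξ|) e(1) + (|ξ'|/|ξ|) e_n`. -/
def muOneVec (n : ℕ) (hn : 0 < n) (ξ : EuclideanSpace ℝ (Fin n)) :
    EuclideanSpace ℝ (Fin n) :=
  (-(ξ (lastIdx n hn) / ‖ξ‖)) • eOneVec n ξ +
    (xiPrimeNorm n ξ / ‖ξ‖) • EuclideanSpace.single (lastIdx n hn) (1 : ℝ)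

lemma sc1 (a b c : ℝ) (hc : 0 < c) (h : c ^ 2 = b ^ 2 + a ^ 2) :
    -(a / c) * -(a / c) + b / c * (b / c) = 1 := by
  field_simp
  nlinarith [h]

lemma sc2 (p s x : ℝ) (hp : 0 < p) (hs : 0 < s) (hs2 : s ^ 2 = p ^ 2 - x ^ 2) :
    s⁻¹ * (x * 0 - p * (s⁻¹ * (x * (x / p) - p))) = 1 := by
  rw [mul_zero, zero_sub]
  field_simp
  nlinarith [hs2]

lemma sc3 (t : ℝ) (h0 : 0 ≤ t) (h : t ^ 2 = 1) : t = 1 := by nlinarith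

lemma stmt2_aux (n : ℕ) (ξ e1 : EuclideanSpace ℝ (Fin n)) (p s : ℝ) (L j : Fin n)
    (hjL : j ≠ L) (hp_pos : 0 < p) (hs_pos : 0 < s)
    (hs2 : s ^ 2 = p ^ 2 - ξ j ^ 2)
    (hnormsq : ‖ξ‖ ^ 2 = p ^ 2 + ξ L ^ 2)
    (he1L : e1 L = 0) (he1j : e1 j = ξ j / p)
    (hee : ⟪e1, e1⟫ = 1) (hxe : ⟪ξ, e1⟫ = p)
    (μ₁ μ₂ : EuclideanSpace ℝ (Fin n)) (α β : ℝ)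
    (hμ₁ : μ₁ = (-(ξ L / ‖ξ‖)) • e1 + (p / ‖ξ‖) • EuclideanSpace.single L (1 : ℝ))
    (hμ₂ : μ₂ = s⁻¹ • (ξ j • e1 - p • EuclideanSpace.single j (1 : ℝ)))
    (hα : α = ξ j * ‖ξ‖ / p) (hβ : β = ξ L / p * s) :
    ‖μ₁‖ = 1 ∧ ‖μ₂‖ = 1 ∧
    ⟪ξ, μ₁⟫ = 0 ∧ ⟪ξ, μ₂⟫ = 0 ∧ ⟪μ₁, μ₂⟫ = 0 ∧
    μ₂ L = 0 ∧
    ξ j • EuclideanSpace.single L (1 : ℝ) - ξ L • EuclideanSpace.single j (1 : ℝ) =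
      α • μ₁ + β • μ₂ := by
  have hξ_pos : (0:ℝ) < ‖ξ‖ := by nlinarith [norm_nonneg ξ, sq_nonneg (ξ L)]
  have hsingle : ∀ (k : Fin n) (v : EuclideanSpace ℝ (Fin n)),
      ⟪v, EuclideanSpace.single k (1:ℝ)⟫ = v k := by
    intro k v; rw [EuclideanSpace.inner_single_right]; simp
  have hsingle' : ∀ (k : Fin n) (v : EuclideanSpace ℝ (Fin n)),
      ⟪EuclideanSpace.single k (1:ℝ), v⟫ = v k := by
    intro k v; rw [EuclideanSpace.inner_single_left]; simp
  have hinμ₁ : ∀ v : EuclideanSpace ℝ (Fin n),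
      ⟪v, μ₁⟫ = -(ξ L / ‖ξ‖) * ⟪v, e1⟫ + p / ‖ξ‖ * v L := by
    intro v
    rw [hμ₁, inner_add_right, real_inner_smul_right, real_inner_smul_right, hsingle]
  have hinμ₂ : ∀ v : EuclideanSpace ℝ (Fin n),
      ⟪v, μ₂⟫ = s⁻¹ * (ξ j * ⟪v, e1⟫ - p * v j) := by
    intro v
    rw [hμ₂, real_inner_smul_right, inner_sub_right, real_inner_smul_right,
      real_inner_smul_right, hsingle]
  have hμ₁e1 : ⟪μ₁, e1⟫ = -(ξ L / ‖ξ‖) := by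
    rw [hμ₁, inner_add_left, real_inner_smul_left, real_inner_smul_left, hee, hsingle', he1L]
    ring
  have hμ₂e1 : ⟪μ₂, e1⟫ = 0 := by
    rw [hμ₂, real_inner_smul_left, inner_sub_left, real_inner_smul_left, real_inner_smul_left,
      hee, hsingle', he1j]
    field_simp
    ring
  have hμ₁L : μ₁ L = p / ‖ξ‖ := by
    rw [hμ₁]
    simp [he1L, EuclideanSpace.single_apply]
  have hμ₁j : μ₁ j = -(ξ L / ‖ξ‖) * (ξ j / p) := by
    rw [hμ₁]
    simp [he1j, EuclideanSpace.single_apply, hjL]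
  have hμ₂j : μ₂ j = s⁻¹ * (ξ j * (ξ j / p) - p) := by
    rw [hμ₂]
    simp [he1j, EuclideanSpace.single_apply]
  have hμ₂L : μ₂ L = 0 := by
    rw [hμ₂]
    simp [he1L, EuclideanSpace.single_apply, hjL.symm]
  have hμ₁μ₁ : ⟪μ₁, μ₁⟫ = 1 := by
    rw [hinμ₁, hμ₁e1, hμ₁L]
    exact sc1 (ξ L) p ‖ξ‖ hξ_pos hnormsq
  have hμ₂μ₂ : ⟪μ₂, μ₂⟫ = 1 := by
    rw [hinμ₂, hμ₂e1, hμ₂j]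
    exact sc2 p s (ξ j) hp_pos hs_pos hs2
  have hξμ₁ : ⟪ξ, μ₁⟫ = 0 := by
    rw [hinμ₁, hxe]; field_simp; ring
  have hξμ₂ : ⟪ξ, μ₂⟫ = 0 := by
    rw [hinμ₂, hxe]; ring_nf
  have hμ₁μ₂ : ⟪μ₁, μ₂⟫ = 0 := by
    rw [hinμ₂, hμ₁e1, hμ₁j]
    field_simp
    ring
  refine ⟨?_, ?_, hξμ₁, hξμ₂, hμ₁μ₂, hμ₂L, ?_⟩
  · refine sc3 _ (norm_nonneg _) ?_
    rw [← real_inner_self_eq_norm_sq, hμ₁μ₁]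
  · refine sc3 _ (norm_nonneg _) ?_
    rw [← real_inner_self_eq_norm_sq, hμ₂μ₂]
  · rw [hμ₁, hμ₂, hα, hβ]
    match_scalars <;> · field_simp; try ring

theorem stmt2 (n : ℕ) (hn : 2 ≤ n) (ξ : EuclideanSpace ℝ (Fin n))
    (j : Fin n) (hj : (j : ℕ) < n - 1)
    (hpos : 0 < xiPrimeNorm n ξ ^ 2 - ξ j ^ 2)
    (μ₁ μ₂ : EuclideanSpace ℝ (Fin n)) (α β : ℝ)
    (hμ₁ : μ₁ = muOneVec n (by omega) ξ)
    (hμ₂ : μ₂ = (Real.sqrt (xiPrimeNorm n ξ ^ 2 - ξ j ^ 2))⁻¹ •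
      (ξ j • eOneVec n ξ - xiPrimeNorm n ξ • EuclideanSpace.single j (1 : ℝ)))
    (hα : α = ξ j * ‖ξ‖ / xiPrimeNorm n ξ)
    (hβ : β = ξ (lastIdx n (by omega)) / xiPrimeNorm n ξ *
      Real.sqrt (xiPrimeNorm n ξ ^ 2 - ξ j ^ 2)) :
    ‖μ₁‖ = 1 ∧ ‖μ₂‖ = 1 ∧
    ⟪ξ, μ₁⟫ = 0 ∧ ⟪ξ, μ₂⟫ = 0 ∧ ⟪μ₁, μ₂⟫ = 0 ∧
    μ₂ (lastIdx n (by omega)) = 0 ∧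
    ξ j • EuclideanSpace.single (lastIdx n (by omega)) (1 : ℝ) -
        ξ (lastIdx n (by omega)) • EuclideanSpace.single j (1 : ℝ) =
      α • μ₁ + β • μ₂ := by
  have hn0 : 0 < n := by omega
  set L : Fin n := lastIdx n hn0 with hLdef
  set p := xiPrimeNorm n ξ with hpdef
  set s := Real.sqrt (p ^ 2 - ξ j ^ 2) with hsdef
  have hLval : (L : ℕ) = n - 1 := rfl
  have hjL : j ≠ L := by
    intro h; rw [h] at hj; omega
  have hsum_nonneg : (0:ℝ) ≤ ∑ i ∈ Finset.univ.filter (fun i : Fin n => (i : ℕ) < n - 1), ξ i ^ 2 :=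
    Finset.sum_nonneg fun i _ => sq_nonneg _
  have hp2 : p ^ 2 = ∑ i ∈ Finset.univ.filter (fun i : Fin n => (i : ℕ) < n - 1), ξ i ^ 2 :=
    Real.sq_sqrt hsum_nonneg
  have hp_pos : 0 < p := by
    have h1 : 0 ≤ p := Real.sqrt_nonneg _
    nlinarith [sq_nonneg (ξ j)]
  have hs_pos : 0 < s := Real.sqrt_pos.mpr hpos
  have hs2 : s ^ 2 = p ^ 2 - ξ j ^ 2 := Real.sq_sqrt hpos.le
  have hnormsq : ‖ξ‖ ^ 2 = p ^ 2 + ξ L ^ 2 := by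
    have h1 : ‖ξ‖ ^ 2 = ∑ i, ξ i ^ 2 := by
      rw [EuclideanSpace.norm_eq, Real.sq_sqrt (Finset.sum_nonneg fun i _ => sq_nonneg _)]
      simp [Real.norm_eq_abs, sq_abs]
    have h2 : (Finset.univ.filter (fun i : Fin n => ¬ (i : ℕ) < n - 1)) = {L} := by
      ext i
      simp only [Finset.mem_filter, Finset.mem_univ, true_and, Finset.mem_singleton, Fin.ext_iff,
        hLval]
      omega
    rw [h1, ← Finset.sum_filter_add_sum_filter_not Finset.univ (fun i : Fin n => (i : ℕ) < n - 1),
      h2, Finset.sum_singleton, hp2]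
  have he1L : eOneVec n ξ L = 0 := by
    simp [eOneVec, hLval]
  have he1j : eOneVec n ξ j = ξ j / p := by
    simp [eOneVec, hj, hpdef]
  have hee : ⟪eOneVec n ξ, eOneVec n ξ⟫ = 1 := by
    rw [PiLp.inner_apply]
    have h : ∀ i : Fin n, ⟪eOneVec n ξ i, eOneVec n ξ i⟫ =
        if (i : ℕ) < n - 1 then ξ i ^ 2 / p ^ 2 else 0 := by
      intro i
      by_cases h : (i : ℕ) < n - 1
      · simp only [eOneVec, PiLp.toLp_apply, if_pos h, RCLike.inner_apply, conj_trivial, ← hpdef]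
        rw [div_mul_div_comm, ← sq, ← sq]
      · simp [eOneVec, h]
    rw [Finset.sum_congr rfl fun i _ => h i, ← Finset.sum_filter, ← Finset.sum_div, ← hp2,
      div_self (by positivity)]
  have hxe : ⟪ξ, eOneVec n ξ⟫ = p := by
    rw [PiLp.inner_apply]
    have h : ∀ i : Fin n, ⟪ξ i, eOneVec n ξ i⟫ =
        if (i : ℕ) < n - 1 then ξ i ^ 2 / p else 0 := by
      intro i
      by_cases h : (i : ℕ) < n - 1
      · simp only [eOneVec, PiLp.toLp_apply, if_pos h, RCLike.inner_apply, conj_trivial, ← hpdef]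
        rw [div_mul_eq_mul_div, ← sq]
      · simp [eOneVec, h]
    rw [Finset.sum_congr rfl fun i _ => h i, ← Finset.sum_filter, ← Finset.sum_div, ← hp2,
      sq, mul_div_assoc, div_self hp_pos.ne', mul_one]
  exact stmt2_aux n ξ (eOneVec n ξ) p s L j hjL hp_pos hs_pos hs2 hnormsq he1L he1j hee hxe
    μ₁ μ₂ α β hμ₁ hμ₂ hα hβ
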